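/- Let D = (d_1, ..., d_n) be a degree sequence with all d_i ≥ 1, let n_2 be the number of indices i with d_i = 2, let M = Σ_{i : d_i ≠ 2} d_i, and define R as follows: sort the degrees in nondecreasing order d_{π_1} ≤ ... ≤ d_{π_n}, let j be the least index with Σ_{i=1}^{j} d_{π_i}(d_{π_i} - 2) > 0 (or j = n if no such index exists), and set R = Σ_{i=j}^{n} d_{π_i}. Then R ≥ M - 2(n - n_2). -/

import Mathlib

open Finset

open scoped Classical in
/-- `jD n e`: for a nondecreasing degree sequence `e 0 ≤ e 1 ≤ ... ≤ e (n-1)`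
(1-indexed in the paper), the least `j` such that `∑_{i=1}^{j} e_i (e_i - 2) > 0`,
or `n` if no such `j ≤ n` exists. -/
noncomputable def jD (n : ℕ) (e : ℕ → ℤ) : ℕ :=
  if h : ∃ j, j ≤ n ∧ 0 < ∑ i ∈ Finset.range j, e i * (e i - 2) then Nat.find h else n

/-- `RD n e = ∑_{i=jD}^{n} e_i` (1-indexed), i.e. the sum of the sorted degrees
from position `jD n e` to `n`. -/
noncomputable def RD (n : ℕ) (e : ℕ → ℤ) : ℤ :=
  ∑ i ∈ Finset.Ico (jD n e - 1) n, e i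

theorem stmt5 (n : ℕ) (d : Fin n → ℕ) (hd : ∀ i, 1 ≤ d i) (e : ℕ → ℤ)
    (hperm : Multiset.map (fun i => (d i : ℤ)) Finset.univ.val =
      Multiset.map e (Finset.range n).val)
    (hmono : ∀ i j : ℕ, i ≤ j → j < n → e i ≤ e j) :
    (∑ i, if d i ≠ 2 then (d i : ℤ) else 0) -
        2 * ((n : ℤ) - ((Finset.univ.filter fun i => d i = 2).card : ℤ)) ≤ RD n e := by

  classical
  have hsum : ∀ g : ℤ → ℤ, (∑ i, g ((d i : ℤ))) = ∑ i ∈ Finset.range n, g (e i) := by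
    intro g
    have h := congrArg (fun m => (Multiset.map g m).sum) hperm
    simpa [Multiset.map_map, Finset.sum, Function.comp_def] using h
  have he1 : ∀ i, i < n → 1 ≤ e i := by
    intro i hi
    have hm : e i ∈ Multiset.map e (Finset.range n).val :=
      Multiset.mem_map_of_mem e (by simpa using hi)
    rw [← hperm] at hm
    obtain ⟨k, -, hk⟩ := Multiset.mem_map.mp hm
    rw [← hk]
    exact_mod_cast hd k
  have hjle : jD n e ≤ n := by
    rw [jD]
    split_ifs with h
    · exact (Nat.find_spec h).1
    · exact le_rfl
  have hmin : ∑ i ∈ Finset.range (jD n e - 1), e i * (e i - 2) ≤ 0 := by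
    rw [jD]
    split_ifs with h
    · rcases Nat.eq_zero_or_pos (Nat.find h) with h0 | hpos
      · simp [h0]
      · have hm := Nat.find_min h (Nat.sub_lt hpos one_pos)
        push_neg at hm
        exact hm (le_trans (Nat.sub_le _ _) (Nat.find_spec h).1)
    · push_neg at h
      exact h _ (Nat.sub_le _ _)
  have key : ∑ i ∈ Finset.range n, (e i - 2) ≤ RD n e := by
    rw [RD]
    have hsplit : ∑ i ∈ Finset.range n, (e i - 2)
        = ∑ i ∈ Finset.range (jD n e - 1), (e i - 2)
          + ∑ i ∈ Finset.Ico (jD n e - 1) n, (e i - 2) := by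
      rw [Finset.range_eq_Ico, Finset.range_eq_Ico]
      exact (Finset.sum_Ico_consecutive _ (Nat.zero_le _)
        (le_trans (Nat.sub_le _ _) hjle)).symm
    rw [hsplit]
    have h1 : ∑ i ∈ Finset.range (jD n e - 1), (e i - 2) ≤ 0 := by
      refine le_trans (Finset.sum_le_sum ?_) hmin
      intro i hi
      have hi' : i < n :=
        lt_of_lt_of_le (Finset.mem_range.mp hi) (le_trans (Nat.sub_le _ _) hjle)
      have h1 := he1 i hi'
      rcases le_or_gt 2 (e i) with h2 | h2
      · nlinarith
      · have h3 : e i = 1 := le_antisymm (by omega) h1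
        rw [h3]; norm_num
    have h2 : ∑ i ∈ Finset.Ico (jD n e - 1) n, (e i - 2)
        ≤ ∑ i ∈ Finset.Ico (jD n e - 1) n, e i :=
      Finset.sum_le_sum fun i _ => by linarith
    linarith
  have e1 : ∑ i, ((d i : ℤ) - 2) = (∑ i, (d i : ℤ)) - 2 * n := by
    rw [Finset.sum_sub_distrib]
    simp [Finset.card_univ, mul_comm]
  have e2 : (∑ i, if d i ≠ 2 then (d i : ℤ) else 0)
      = (∑ i, (d i : ℤ)) - 2 * ((Finset.univ.filter fun i => d i = 2).card : ℤ) := by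
    have hpt : ∀ i, (if d i ≠ 2 then (d i : ℤ) else 0)
        = (d i : ℤ) - (if d i = 2 then 2 else 0) := by
      intro i
      by_cases h : d i = 2 <;> simp [h]
    rw [Finset.sum_congr rfl (fun i _ => hpt i), Finset.sum_sub_distrib]
    congr 1
    rw [← Finset.sum_filter]
    simp [mul_comm]
  have e3 := hsum (fun x => x - 2)
  linarith [key, e1, e2, e3]
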